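/- Let P be a symmetric solution of the ARE, set A₋ = A − BR⁻¹BᵀP, and let E be a real n×n matrix satisfying the Lyapunov equation A₋E + EA₋ᵀ − BR⁻¹Bᵀ = 0. Let M be the 2n×2n block matrix [[A, BR⁻¹Bᵀ], [Q, −Aᵀ]] and let L be the 2n×2n block matrix [[I + EP, E], [P, I]]. Then L is invertible, its inverse is the block matrix [[I, −E], [−P, I + PE]], and LML⁻¹ equals the block diagonal matrix [[A₋, 0], [0, −A₋ᵀ]]. -/

import Mathlib

open Matrix

/-- block diagonalization of the extremal matrix `M` by
`L = [[I + EP, E], [P, I]]`, where `E` solves the Lyapunov equation. -/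
theorem block_diagonalization_semigroup
    (n m : ℕ) (hn : 1 ≤ n) (hm : 1 ≤ m)
    (A : Matrix (Fin n) (Fin n) ℝ) (B : Matrix (Fin n) (Fin m) ℝ)
    (Q : Matrix (Fin n) (Fin n) ℝ) (hQ : Q.PosDef)
    (R : Matrix (Fin m) (Fin m) ℝ) (hR : R.PosDef)
    (P : Matrix (Fin n) (Fin n) ℝ) (hPsymm : Pᵀ = P)
    (hARE : Aᵀ * P + P * A - P * B * R⁻¹ * Bᵀ * P = -Q)
    (E : Matrix (Fin n) (Fin n) ℝ)
    (hLyap : (A - B * R⁻¹ * Bᵀ * P) * E + E * (A - B * R⁻¹ * Bᵀ * P)ᵀ - B * R⁻¹ * Bᵀ = 0) :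
    IsUnit (Matrix.fromBlocks (1 + E * P) E P (1 : Matrix (Fin n) (Fin n) ℝ)) ∧
    (Matrix.fromBlocks (1 + E * P) E P (1 : Matrix (Fin n) (Fin n) ℝ))⁻¹
      = Matrix.fromBlocks 1 (-E) (-P) (1 + P * E) ∧
    Matrix.fromBlocks (1 + E * P) E P (1 : Matrix (Fin n) (Fin n) ℝ)
        * Matrix.fromBlocks A (B * R⁻¹ * Bᵀ) Q (-Aᵀ)
        * (Matrix.fromBlocks (1 + E * P) E P (1 : Matrix (Fin n) (Fin n) ℝ))⁻¹
      = Matrix.fromBlocks (A - B * R⁻¹ * Bᵀ * P) 0 0 (-(A - B * R⁻¹ * Bᵀ * P)ᵀ) := by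
  have hRT : Rᵀ = R := by simpa using hR.1.eq
  have hRinv : (R⁻¹)ᵀ = R⁻¹ := by rw [Matrix.transpose_nonsing_inv, hRT]
  have hT : (A - B * R⁻¹ * Bᵀ * P)ᵀ = Aᵀ - P * (B * R⁻¹ * Bᵀ) := by
    simp [transpose_sub, transpose_mul, hPsymm, hRinv, Matrix.mul_assoc]
  rw [hT] at hLyap
  have e1 : P * B * R⁻¹ * Bᵀ * P = P * (B * R⁻¹ * Bᵀ) * P := by
    simp [Matrix.mul_assoc]
  rw [e1] at hARE
  have hmul : Matrix.fromBlocks (1 + E * P) E P (1 : Matrix (Fin n) (Fin n) ℝ)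
      * Matrix.fromBlocks 1 (-E) (-P) (1 + P * E) = 1 := by
    rw [Matrix.fromBlocks_multiply, ← Matrix.fromBlocks_one]
    rw [Matrix.fromBlocks_inj]
    refine ⟨?_, ?_, ?_, ?_⟩ <;> noncomm_ring
  have hinv : (Matrix.fromBlocks (1 + E * P) E P (1 : Matrix (Fin n) (Fin n) ℝ))⁻¹
      = Matrix.fromBlocks 1 (-E) (-P) (1 + P * E) := Matrix.inv_eq_right_inv hmul
  refine ⟨IsUnit.of_mul_eq_one _ hmul, hinv, ?_⟩
  rw [hinv, hT, Matrix.fromBlocks_multiply, Matrix.fromBlocks_multiply,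
    Matrix.fromBlocks_inj]
  refine ⟨?_, ?_, ?_, ?_⟩
  · linear_combination (norm := noncomm_ring) E * hARE
  · linear_combination (norm := noncomm_ring) (-E) * hARE * E - hLyap
  · linear_combination (norm := noncomm_ring) hARE
  · linear_combination (norm := noncomm_ring) -(hARE * E)
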